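/- Let d ≥ 1 and let q : ℤ^d → [0,1] be a probability distribution with q(0) = 0. Let β, δ : P_F → ℝ satisfy: β(∅) = 0; β(A) = δ(A) = 0 whenever 0 ∈ A; Σ_{A∈P_F}(|β(A)| + |δ(A)|) < ∞; c_β := Σ_{A∈P_F} β(A)⁺ > 0; and there are constants k > 0 and N ≥ k such that for every ξ : ℤ^d → {0,1} and every x with ξ(x) = 1, Σ_{A∈P_F} δ(A) χ(A, x, ξ) ≥ −k Σ_{y} q(y − x)(1 − ξ(y)). For ξ : ℤ^d → {0,1} define f₁(x,ξ) = Σ_y q(y−x)ξ(y), f₀(x,ξ) = Σ_y q(y−x)(1−ξ(y)), and the flip rate c(x, ξ) = N Σ_y q(y−x) 1{ξ(y) ≠ ξ(x)} + Σ_{A∈P_F} χ(A, x, ξ)( β(A) 1{ξ(x)=0} + δ(A) 1{ξ(x)=1} ). Define the probability distribution q̂(a) = c_β^{-1} Σ_{A∈P_F : a∈A} β(A)⁺/|A|, let q̄ = ( k q + c_β q̂ )/(k + c_β), set f̄₁(x,ξ) = Σ_y q̄(y−x)ξ(y), and define the biased voter rate c̄(x, ξ) = (N − k) f₁(x, ξ)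 + (k + c_β) f̄₁(x, ξ) if ξ(x) = 0, and c̄(x, ξ) = (N − k) f₀(x, ξ) if ξ(x) = 1. Then for all configurations ξ ≤ ξ̄ (pointwise) and all x ∈ ℤ^d: (a) if ξ(x) = ξ̄(x) = 0 then c(x, ξ) ≤ c̄(x, ξ̄); (b) if ξ(x) = ξ̄(x) = 1 then c(x, ξ) ≥ c̄(x, ξ̄). -/

import Mathlib

open scoped Classical

noncomputable section

/-- `χ(A, x, ξ) = ∏_{a∈A} ξ(x+a)` (with `χ(∅,x,ξ) = 1`). -/
def lvChi (d : ℕ) (A : Finset (Fin d → ℤ)) (x : Fin d → ℤ)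
    (ξ : (Fin d → ℤ) → ℝ) : ℝ :=
  ∏ a ∈ A, ξ (x + a)

/-- Local density of ones: `f₁(x,ξ) = Σ_y r(y−x) ξ(y)` for a kernel `r`. -/
def lvF1 (d : ℕ) (r ξ : (Fin d → ℤ) → ℝ) (x : Fin d → ℤ) : ℝ :=
  ∑' y, r (y - x) * ξ y

/-- Local density of zeros: `f₀(x,ξ) = Σ_y r(y−x)(1 − ξ(y))`. -/
def lvF0 (d : ℕ) (r ξ : (Fin d → ℤ) → ℝ) (x : Fin d → ℤ) : ℝ :=
  ∑' y, r (y - x) * (1 - ξ y)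

/-- `c_β = Σ_A β(A)⁺`. -/
def lvCbeta (d : ℕ) (β : Finset (Fin d → ℤ) → ℝ) : ℝ :=
  ∑' A : Finset (Fin d → ℤ), max (β A) 0

/-- `q̂(a) = c_β⁻¹ Σ_{A ∋ a} β(A)⁺ / |A|`. -/
def lvQhat (d : ℕ) (β : Finset (Fin d → ℤ) → ℝ) (a : Fin d → ℤ) : ℝ :=
  (lvCbeta d β)⁻¹ *
    ∑' A : Finset (Fin d → ℤ), if a ∈ A then max (β A) 0 / (A.card : ℝ) else 0

/-- `q̄ = (k q + c_β q̂)/(k + c_β)`. -/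
def lvQbar (d : ℕ) (q : (Fin d → ℤ) → ℝ) (β : Finset (Fin d → ℤ) → ℝ) (k : ℝ)
    (a : Fin d → ℤ) : ℝ :=
  (k * q a + lvCbeta d β * lvQhat d β a) / (k + lvCbeta d β)

/-- The flip rate of the voter model perturbation:
`c(x,ξ) = N Σ_y q(y−x) 1{ξ(y)≠ξ(x)} + Σ_A χ(A,x,ξ)(β(A) 1{ξ(x)=0} + δ(A) 1{ξ(x)=1})`. -/
def lvRate (d : ℕ) (q : (Fin d → ℤ) → ℝ) (β δ : Finset (Fin d → ℤ) → ℝ)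
    (N : ℝ) (x : Fin d → ℤ) (ξ : (Fin d → ℤ) → ℝ) : ℝ :=
  N * (∑' y, q (y - x) * (if ξ y ≠ ξ x then (1 : ℝ) else 0)) +
    ∑' A : Finset (Fin d → ℤ),
      lvChi d A x ξ * ((if ξ x = 0 then β A else 0) + (if ξ x = 1 then δ A else 0))

/-- The flip rate of the dominating biased voter model:
`c̄(x,ξ) = (N−k) f₁ + (k+c_β) f̄₁` if `ξ(x) = 0`, and `(N−k) f₀` if `ξ(x) = 1`. -/
def lvBrate (d : ℕ) (q : (Fin d → ℤ) → ℝ) (β : Finset (Fin d → ℤ) → ℝ)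
    (N k : ℝ) (x : Fin d → ℤ) (ξ : (Fin d → ℤ) → ℝ) : ℝ :=
  if ξ x = 0 then
    (N - k) * lvF1 d q ξ x + (k + lvCbeta d β) * lvF1 d (lvQbar d q β k) ξ x
  else (N - k) * lvF0 d q ξ x

section Aux

variable {d : ℕ}

lemma lv_summable_shift {r : (Fin d → ℤ) → ℝ} (hr : Summable r) (x : Fin d → ℤ) :
    Summable fun y => r (y - x) :=
  (Equiv.subRight x).summable_iff.mpr hr

lemma lv_summable_mul {r w : (Fin d → ℤ) → ℝ} (hr : Summable r) (hr0 : ∀ y, 0 ≤ r y)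
    (hw : ∀ y, 0 ≤ w y ∧ w y ≤ 1) (x : Fin d → ℤ) :
    Summable fun y => r (y - x) * w y := by
  refine Summable.of_nonneg_of_le (fun y => mul_nonneg (hr0 _) (hw y).1)
    (fun y => ?_) (lv_summable_shift hr x)
  calc r (y - x) * w y ≤ r (y - x) * 1 :=
        mul_le_mul_of_nonneg_left (hw y).2 (hr0 _)
    _ = r (y - x) := mul_one _

lemma lv_chi_nonneg {A : Finset (Fin d → ℤ)} {x : Fin d → ℤ} {ξ : (Fin d → ℤ) → ℝ}
    (hξ : ∀ y, 0 ≤ ξ y) : 0 ≤ lvChi d A x ξ :=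
  Finset.prod_nonneg fun a _ => hξ _

lemma lv_chi_le_one {A : Finset (Fin d → ℤ)} {x : Fin d → ℤ} {ξ : (Fin d → ℤ) → ℝ}
    (hξ : ∀ y, 0 ≤ ξ y ∧ ξ y ≤ 1) : lvChi d A x ξ ≤ 1 :=
  Finset.prod_le_one (fun a _ => (hξ _).1) (fun a _ => (hξ _).2)

lemma lv_chi_mono {A : Finset (Fin d → ℤ)} {x : Fin d → ℤ} {ξ ξbar : (Fin d → ℤ) → ℝ}
    (hξ : ∀ y, 0 ≤ ξ y) (hle : ∀ y, ξ y ≤ ξbar y) :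
    lvChi d A x ξ ≤ lvChi d A x ξbar :=
  Finset.prod_le_prod (fun a _ => hξ _) (fun a _ => hle _)

lemma lv_chi_le_pt {A : Finset (Fin d → ℤ)} {x a : Fin d → ℤ} {ξ : (Fin d → ℤ) → ℝ}
    (hξ : ∀ y, 0 ≤ ξ y ∧ ξ y ≤ 1) (ha : a ∈ A) : lvChi d A x ξ ≤ ξ (x + a) := by
  rw [lvChi, ← Finset.mul_prod_erase A _ ha]
  calc ξ (x + a) * ∏ b ∈ A.erase a, ξ (x + b)
      ≤ ξ (x + a) * 1 := by
        refine mul_le_mul_of_nonneg_left ?_ (hξ _).1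
        exact Finset.prod_le_one (fun b _ => (hξ _).1) (fun b _ => (hξ _).2)
    _ = ξ (x + a) := mul_one _

end Aux

theorem stmt_9 (d : ℕ) (hd : 1 ≤ d)
    (q : (Fin d → ℤ) → ℝ)
    (hq0 : ∀ y, 0 ≤ q y) (hq1 : ∀ y, q y ≤ 1) (hqsum : HasSum q 1) (hqzero : q 0 = 0)
    (β δ : Finset (Fin d → ℤ) → ℝ)
    (hβempty : β ∅ = 0)
    (hzero : ∀ A : Finset (Fin d → ℤ), (0 : Fin d → ℤ) ∈ A → β A = 0 ∧ δ A = 0)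
    (hsum : Summable fun A : Finset (Fin d → ℤ) => |β A| + |δ A|)
    (hcβ : 0 < lvCbeta d β)
    (k N : ℝ) (hk : 0 < k) (hkN : k ≤ N)
    (hP4 : ∀ ξ : (Fin d → ℤ) → ℝ, (∀ x, ξ x = 0 ∨ ξ x = 1) → ∀ x, ξ x = 1 →
      -(k * lvF0 d q ξ x) ≤ ∑' A : Finset (Fin d → ℤ), δ A * lvChi d A x ξ) :
    ∀ ξ ξbar : (Fin d → ℤ) → ℝ,
      (∀ x, ξ x = 0 ∨ ξ x = 1) → (∀ x, ξbar x = 0 ∨ ξbar x = 1) →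
      (∀ x, ξ x ≤ ξbar x) → ∀ x : Fin d → ℤ,
      (ξ x = 0 → ξbar x = 0 → lvRate d q β δ N x ξ ≤ lvBrate d q β N k x ξbar) ∧
      (ξ x = 1 → ξbar x = 1 → lvBrate d q β N k x ξbar ≤ lvRate d q β δ N x ξ) := by
  intro ξ ξbar hb hbbar hle x
  have hqs : Summable q := hqsum.summable
  -- 0/1 bounds
  have hξ01 : ∀ y, 0 ≤ ξ y ∧ ξ y ≤ 1 := by
    intro y; rcases hb y with h | h <;> rw [h] <;> norm_num
  have hξb01 : ∀ y, 0 ≤ ξbar y ∧ ξbar y ≤ 1 := by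
    intro y; rcases hbbar y with h | h <;> rw [h] <;> norm_num
  -- summability of β⁺, |β|, |δ|
  have hβabs : Summable fun A : Finset (Fin d → ℤ) => |β A| :=
    Summable.of_nonneg_of_le (fun A => abs_nonneg _)
      (fun A => le_add_of_nonneg_right (abs_nonneg _)) hsum
  have hδabs : Summable fun A : Finset (Fin d → ℤ) => |δ A| :=
    Summable.of_nonneg_of_le (fun A => abs_nonneg _)
      (fun A => le_add_of_nonneg_left (abs_nonneg _)) hsum
  have hβp : Summable fun A : Finset (Fin d → ℤ) => max (β A) 0 :=
    Summable.of_nonneg_of_le (fun A => le_max_right _ _)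
      (fun A => max_le (le_abs_self _) (abs_nonneg _)) hβabs
  -- the kernel g
  set g : Finset (Fin d → ℤ) → (Fin d → ℤ) → ℝ :=
    fun A a => if a ∈ A then max (β A) 0 / (A.card : ℝ) else 0 with hg_def
  have hg0 : ∀ A a, 0 ≤ g A a := by
    intro A a
    simp only [hg_def]
    split
    · exact div_nonneg (le_max_right _ _) (Nat.cast_nonneg _)
    · exact le_rfl
  have hgAs : ∀ A, Summable (g A) := by
    intro A
    exact summable_of_ne_finset_zero (s := A) (fun a ha => if_neg ha)
  have hgA : ∀ A, ∑' a, g A a = max (β A) 0 := by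
    intro A
    rw [tsum_eq_sum (s := A) (fun a ha => if_neg ha)]
    rcases eq_or_ne A ∅ with rfl | hA
    · simp [hβempty]
    · have hcard : (A.card : ℝ) ≠ 0 := by
        simpa [Finset.card_eq_zero] using hA
      rw [Finset.sum_congr rfl (fun a ha => if_pos ha), Finset.sum_const,
        nsmul_eq_mul, mul_comm, div_mul_cancel₀ _ hcard]
  have hF : Summable (fun p : Finset (Fin d → ℤ) × (Fin d → ℤ) => g p.1 p.2) := by
    refine (summable_prod_of_nonneg (fun p => hg0 _ _)).2 ⟨fun A => hgAs A, ?_⟩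
    simpa only [hgA] using hβp
  -- S a = Σ_A g A a = c_β q̂ a
  set S : (Fin d → ℤ) → ℝ := fun a => ∑' A, g A a with hS_def
  have hSsum : Summable S := by
    have := hF.prod_symm
    exact ((summable_prod_of_nonneg (fun p => hg0 _ _)).1 this).2
  have hS0 : ∀ a, 0 ≤ S a := fun a => tsum_nonneg fun A => hg0 A a
  have hqhat : ∀ a, lvQhat d β a = (lvCbeta d β)⁻¹ * S a := fun a => rfl
  have hqhat0 : ∀ a, 0 ≤ lvQhat d β a := fun a =>
    mul_nonneg (inv_nonneg.2 hcβ.le) (hS0 a)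
  have hqhatsum : Summable (lvQhat d β) := by
    exact hSsum.mul_left (lvCbeta d β)⁻¹
  have hqbar0 : ∀ a, 0 ≤ lvQbar d q β k a := by
    intro a
    exact div_nonneg (add_nonneg (mul_nonneg hk.le (hq0 a))
      (mul_nonneg hcβ.le (hqhat0 a))) (add_nonneg hk.le hcβ.le)
  have hqbarsum : Summable (lvQbar d q β k) := by
    have : Summable fun a => (k * q a + lvCbeta d β * lvQhat d β a) :=
      ((hqs.mul_left k).add (hqhatsum.mul_left (lvCbeta d β)))
    exact (this.mul_right (k + lvCbeta d β)⁻¹).congr fun a => by simp only [lvQbar, div_eq_mul_inv]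
  have hkc : (k + lvCbeta d β) ≠ 0 := by positivity
  -- decomposition of (k+c_β) f̄₁
  have hdecomp : (k + lvCbeta d β) * lvF1 d (lvQbar d q β k) ξbar x
      = k * lvF1 d q ξbar x + lvCbeta d β * lvF1 d (lvQhat d β) ξbar x := by
    rw [lvF1, ← tsum_mul_left]
    rw [lvF1, lvF1, ← tsum_mul_left, ← tsum_mul_left, ← Summable.tsum_add
      ((lv_summable_mul hqs hq0 hξb01 x).mul_left k)
      ((lv_summable_mul hqhatsum hqhat0 hξb01 x).mul_left (lvCbeta d β))]
    refine tsum_congr fun y => ?_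
    rw [lvQbar, ← mul_assoc, mul_div_cancel₀ _ hkc]
    ring
  -- monotonicity of f₁ in ξ
  have hf1mono : ∀ (r : (Fin d → ℤ) → ℝ), Summable r → (∀ y, 0 ≤ r y) →
      lvF1 d r ξ x ≤ lvF1 d r ξbar x := by
    intro r hr hr0
    exact Summable.tsum_le_tsum (fun y => mul_le_mul_of_nonneg_left (hle y) (hr0 _))
      (lv_summable_mul hr hr0 hξ01 x) (lv_summable_mul hr hr0 hξb01 x)
  have hf1nonneg : 0 ≤ lvF1 d q ξbar x :=
    tsum_nonneg fun y => mul_nonneg (hq0 _) (hξb01 y).1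
  constructor
  · -- case (a): ξ x = 0 = ξbar x
    intro hx hxb
    -- rewrite lvRate
    have hrate : lvRate d q β δ N x ξ
        = N * lvF1 d q ξ x + ∑' A, lvChi d A x ξ * β A := by
      rw [lvRate, lvF1]
      congr 1
      · congr 1
        refine tsum_congr fun y => ?_
        rcases hb y with h | h <;> simp [h, hx]
      · refine tsum_congr fun A => ?_
        rw [hx]
        norm_num
    have hbrate : lvBrate d q β N k x ξbar
        = (N - k) * lvF1 d q ξbar x + (k + lvCbeta d β) * lvF1 d (lvQbar d q β k) ξbar x := by
      rw [lvBrate, if_pos hxb]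
    -- key chain of inequalities for the perturbation part
    set w : (Fin d → ℤ) → ℝ := fun a => ξbar (x + a) with hw_def
    have hw01 : ∀ a, 0 ≤ w a ∧ w a ≤ 1 := fun a => hξb01 _
    -- step 1
    have hsum1 : Summable fun A => lvChi d A x ξ * β A := by
      apply Summable.of_abs
      refine Summable.of_nonneg_of_le (fun A => abs_nonneg _) (fun A => ?_) hβabs
      rw [abs_mul]
      calc |lvChi d A x ξ| * |β A| ≤ 1 * |β A| := by
            refine mul_le_mul_of_nonneg_right ?_ (abs_nonneg _)
            rw [abs_of_nonneg (lv_chi_nonneg fun y => (hξ01 y).1)]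
            exact lv_chi_le_one hξ01
        _ = |β A| := one_mul _
    have hsum2 : Summable fun A => max (β A) 0 * lvChi d A x ξbar := by
      refine Summable.of_nonneg_of_le
        (fun A => mul_nonneg (le_max_right _ _) (lv_chi_nonneg fun y => (hξb01 y).1))
        (fun A => ?_) hβp
      calc max (β A) 0 * lvChi d A x ξbar ≤ max (β A) 0 * 1 :=
            mul_le_mul_of_nonneg_left (lv_chi_le_one hξb01) (le_max_right _ _)
        _ = max (β A) 0 := mul_one _
    have hstep1 : (∑' A, lvChi d A x ξ * β A) ≤ ∑' A, max (β A) 0 * lvChi d A x ξbar := by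
      refine Summable.tsum_le_tsum (fun A => ?_) hsum1 hsum2
      calc lvChi d A x ξ * β A ≤ lvChi d A x ξ * max (β A) 0 :=
            mul_le_mul_of_nonneg_left (le_max_left _ _) (lv_chi_nonneg fun y => (hξ01 y).1)
        _ = max (β A) 0 * lvChi d A x ξ := mul_comm _ _
        _ ≤ max (β A) 0 * lvChi d A x ξbar :=
            mul_le_mul_of_nonneg_left (lv_chi_mono (fun y => (hξ01 y).1) hle) (le_max_right _ _)
    -- the weighted kernel G
    have hG0 : ∀ (A : Finset (Fin d → ℤ)) (a : Fin d → ℤ), 0 ≤ g A a * w a :=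
      fun A a => mul_nonneg (hg0 A a) (hw01 a).1
    have hGsum : Summable (fun p : Finset (Fin d → ℤ) × (Fin d → ℤ) => g p.1 p.2 * w p.2) := by
      refine Summable.of_nonneg_of_le (fun p => hG0 _ _) (fun p => ?_) hF
      calc g p.1 p.2 * w p.2 ≤ g p.1 p.2 * 1 :=
            mul_le_mul_of_nonneg_left (hw01 _).2 (hg0 _ _)
        _ = g p.1 p.2 := mul_one _
    have hGfiber : ∀ A, ∑' a, g A a * w a = ∑ a ∈ A, (max (β A) 0 / (A.card : ℝ)) * w a := by
      intro A
      rw [tsum_eq_sum (s := A) (fun a ha => by simp [hg_def, if_neg ha])]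
      exact Finset.sum_congr rfl fun a ha => by simp [hg_def, if_pos ha]
    have hGmarg : Summable fun A => ∑' a, g A a * w a :=
      ((summable_prod_of_nonneg (fun p => hG0 _ _)).1 hGsum).2
    -- step 2 : per-A average bound
    have hstep2 : (∑' A, max (β A) 0 * lvChi d A x ξbar) ≤ ∑' A, ∑' a, g A a * w a := by
      refine Summable.tsum_le_tsum (fun A => ?_) hsum2 hGmarg
      rw [hGfiber A]
      rcases eq_or_ne A ∅ with rfl | hA
      · simp [hβempty, lvChi]
      · have hcard : (0 : ℝ) < (A.card : ℝ) := by
          have : A.card ≠ 0 := by simpa [Finset.card_eq_zero] using hA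
          exact_mod_cast Nat.pos_of_ne_zero this
        rw [← Finset.mul_sum]
        have hkey : (A.card : ℝ) * lvChi d A x ξbar ≤ ∑ a ∈ A, w a := by
          calc (A.card : ℝ) * lvChi d A x ξbar
              = ∑ _a ∈ A, lvChi d A x ξbar := by
                rw [Finset.sum_const, nsmul_eq_mul]
            _ ≤ ∑ a ∈ A, w a :=
                Finset.sum_le_sum fun a ha => lv_chi_le_pt hξb01 ha
        calc max (β A) 0 * lvChi d A x ξbar
            = (max (β A) 0 / (A.card : ℝ)) * ((A.card : ℝ) * lvChi d A x ξbar) := by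
              field_simp
          _ ≤ (max (β A) 0 / (A.card : ℝ)) * ∑ a ∈ A, w a :=
              mul_le_mul_of_nonneg_left hkey
                (div_nonneg (le_max_right _ _) hcard.le)
    -- step 3 : Fubini
    have hstep3 : (∑' A, ∑' a, g A a * w a) = ∑' a, S a * w a := by
      rw [← Summable.tsum_comm (f := fun A a => g A a * w a) hGsum]
      refine tsum_congr fun a => ?_
      rw [hS_def]
      exact tsum_mul_right
    -- step 4 : identify with c_β f₁(q̂, ξbar)
    have hSw : Summable fun a => S a * w a := by
      refine Summable.of_nonneg_of_le (fun a => mul_nonneg (hS0 a) (hw01 a).1)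
        (fun a => ?_) hSsum
      calc S a * w a ≤ S a * 1 := mul_le_mul_of_nonneg_left (hw01 a).2 (hS0 a)
        _ = S a := mul_one _
    have hstep4 : (∑' a, S a * w a) = lvCbeta d β * lvF1 d (lvQhat d β) ξbar x := by
      rw [lvF1]
      have hre : (∑' y, lvQhat d β (y - x) * ξbar y) = ∑' a, lvQhat d β a * w a := by
        rw [← (Equiv.addLeft x).tsum_eq (fun y => lvQhat d β (y - x) * ξbar y)]
        refine tsum_congr fun a => ?_
        simp [hw_def, Equiv.coe_addLeft, add_sub_cancel_left]
      rw [hre, ← tsum_mul_left]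
      refine tsum_congr fun a => ?_
      rw [hqhat, ← mul_assoc, ← mul_assoc, mul_inv_cancel₀ hcβ.ne', one_mul]
    have hpert : (∑' A, lvChi d A x ξ * β A) ≤ lvCbeta d β * lvF1 d (lvQhat d β) ξbar x := by
      rw [← hstep4, ← hstep3]
      exact hstep1.trans hstep2
    rw [hrate, hbrate, hdecomp]
    have hN0 : (0 : ℝ) ≤ N := hk.le.trans hkN
    have hmono := hf1mono q hqs hq0
    nlinarith [mul_le_mul_of_nonneg_left hmono hN0]
  · -- case (b): ξ x = 1 = ξbar x
    intro hx hxb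
    have hrate : lvRate d q β δ N x ξ
        = N * lvF0 d q ξ x + ∑' A, δ A * lvChi d A x ξ := by
      rw [lvRate, lvF0]
      congr 1
      · congr 1
        refine tsum_congr fun y => ?_
        rcases hb y with h | h <;> simp [h, hx]
      · refine tsum_congr fun A => ?_
        rw [hx]
        norm_num [mul_comm]
    have hbrate : lvBrate d q β N k x ξbar = (N - k) * lvF0 d q ξbar x := by
      rw [lvBrate, if_neg (by rw [hxb]; norm_num)]
    have hf0mono : lvF0 d q ξbar x ≤ lvF0 d q ξ x := by
      refine Summable.tsum_le_tsum (fun y => ?_) ?_ ?_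
      · exact mul_le_mul_of_nonneg_left (by linarith [hle y]) (hq0 _)
      · exact Summable.of_nonneg_of_le
          (fun y => mul_nonneg (hq0 _) (by linarith [(hξb01 y).2]))
          (fun y => by
            calc q (y - x) * (1 - ξbar y) ≤ q (y - x) * 1 :=
                  mul_le_mul_of_nonneg_left (by linarith [(hξb01 y).1]) (hq0 _)
              _ = q (y - x) := mul_one _) (lv_summable_shift hqs x)
      · exact Summable.of_nonneg_of_le
          (fun y => mul_nonneg (hq0 _) (by linarith [(hξ01 y).2]))
          (fun y => by
            calc q (y - x) * (1 - ξ y) ≤ q (y - x) * 1 :=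
                  mul_le_mul_of_nonneg_left (by linarith [(hξ01 y).1]) (hq0 _)
              _ = q (y - x) := mul_one _) (lv_summable_shift hqs x)
    have hP := hP4 ξ hb x hx
    rw [hrate, hbrate]
    have h1 : (N - k) * lvF0 d q ξbar x ≤ (N - k) * lvF0 d q ξ x :=
      mul_le_mul_of_nonneg_left hf0mono (by linarith)
    linarith
  done

end
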